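/- If G is a finite nilpotent group that is not a 2-group, then α(G) ≠ 3/4 (in fact, if G has a Sylow p-subgroup of odd order p^m > 1 then α(G) < 3/4). -/

import Mathlib

/-- `α(G) = |L₁(G)| / |G|`, where `L₁(G)` is the set of cyclic subgroups of `G`. -/
noncomputable def alpha (G : Type*) [Group G] : ℚ :=
  (Nat.card {H : Subgroup G // IsCyclic H} : ℚ) / (Nat.card G : ℚ)

lemma isCyclic_iff_exists_zpowers {G : Type*} [Group G] (H : Subgroup G) :
    IsCyclic H ↔ ∃ g : G, Subgroup.zpowers g = H := by
  constructor
  · intro h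
    obtain ⟨⟨g, hg⟩, hgen⟩ := h.exists_generator
    refine ⟨g, le_antisymm ((Subgroup.zpowers_le).mpr hg) ?_⟩
    intro x hx
    obtain ⟨n, hn⟩ := hgen ⟨x, hx⟩
    exact ⟨n, congrArg Subtype.val hn⟩
  · rintro ⟨g, rfl⟩
    refine ⟨⟨⟨g, Subgroup.mem_zpowers g⟩, ?_⟩⟩
    rintro ⟨x, n, rfl⟩
    exact ⟨n, Subtype.ext (by push_cast; rfl)⟩

lemma alpha_lt {G : Type*} [Group G] [Finite G] (hnil : Group.IsNilpotent G)
    {p : ℕ} (hp : p.Prime) (hodd : Odd p) (hdvd : p ∣ Nat.card G) :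
    alpha G < 3 / 4 := by
  classical
  have fG : Fintype G := Fintype.ofFinite G
  haveI h2 : Fact (Nat.Prime 2) := ⟨Nat.prime_two⟩
  set f : G → Subgroup G := fun g => Subgroup.zpowers g with hf
  set S : Finset (Subgroup G) := Finset.univ.image f with hS
  -- the number of cyclic subgroups equals S.card
  have hScard : Nat.card {H : Subgroup G // IsCyclic H} = S.card := by
    rw [Nat.card_eq_fintype_card, Fintype.card_subtype]
    congr 1
    ext H
    simp only [Finset.mem_filter, Finset.mem_univ, true_and, hS, Finset.mem_image,
      isCyclic_iff_exists_zpowers]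
    exact Iff.rfl
  set T : Finset G := Finset.univ.filter (fun g => g ^ 2 = 1) with hT
  -- basic facts about fibers
  have horder : ∀ g : G, Nat.card (f g) = orderOf g := fun g => Nat.card_zpowers g
  have hmemS : ∀ g : G, f g ∈ S := fun g => Finset.mem_image_of_mem f (Finset.mem_univ g)
  have hTiff : ∀ g : G, g ∈ T ↔ Nat.card (f g) ≤ 2 := by
    intro g
    rw [hT, Finset.mem_filter, horder]
    constructor
    · rintro ⟨-, hg⟩
      exact Nat.le_of_dvd (by norm_num) (orderOf_dvd_of_pow_eq_one hg)
    · intro hle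
      refine ⟨Finset.mem_univ g, orderOf_dvd_iff_pow_eq_one.mp ?_⟩
      have h1 := orderOf_pos g
      interval_cases h : orderOf g <;> simp
  set S₁ : Finset (Subgroup G) := S.filter (fun C => Nat.card C ≤ 2) with hS₁
  set S₂ : Finset (Subgroup G) := S.filter (fun C => ¬ Nat.card C ≤ 2) with hS₂
  -- fibers over S₂ have at least 2 elements
  have hfib2 : ∀ C ∈ S₂, 2 ≤ (Finset.univ.filter (fun g => f g = C)).card := by
    intro C hC
    rw [hS₂, Finset.mem_filter] at hC
    obtain ⟨hCS, hbig⟩ := hC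
    obtain ⟨g, -, hg⟩ := Finset.mem_image.mp hCS
    have hginv : f g⁻¹ = C := by rw [hf]; simpa [Subgroup.zpowers_inv] using hg
    have hne : g ≠ g⁻¹ := by
      intro hEq
      apply hbig
      rw [← hg, horder]
      exact Nat.le_of_dvd (by norm_num) (orderOf_dvd_of_pow_eq_one
        (by rw [pow_two]; nth_rw 2 [hEq]; exact mul_inv_cancel g))
    refine Finset.one_lt_card.mpr ⟨g, ?_, g⁻¹, ?_, hne⟩ <;>
      simp [Finset.mem_filter, hg, hginv]
  -- T.card bounds S₁.card
  have hmapT : ∀ g ∈ T, f g ∈ S₁ := by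
    intro g hg
    rw [hS₁, Finset.mem_filter]
    exact ⟨hmemS g, (hTiff g).mp hg⟩
  have hTsum : T.card = ∑ C ∈ S₁, (T.filter (fun g => f g = C)).card :=
    Finset.card_eq_sum_card_fiberwise hmapT
  have hS₁T : S₁.card ≤ T.card := by
    rw [hTsum]
    have : ∀ C ∈ S₁, 1 ≤ (T.filter (fun g => f g = C)).card := by
      intro C hC
      rw [hS₁, Finset.mem_filter] at hC
      obtain ⟨hCS, hsmall⟩ := hC
      obtain ⟨g, -, hg⟩ := Finset.mem_image.mp hCS
      refine Finset.card_pos.mpr ⟨g, Finset.mem_filter.mpr ⟨?_, hg⟩⟩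
      exact (hTiff g).mpr (by rw [hg]; exact hsmall)
    calc S₁.card = ∑ _C ∈ S₁, 1 := by simp
    _ ≤ _ := Finset.sum_le_sum this
  -- main counting
  have hGsum : Fintype.card G = ∑ C ∈ S, (Finset.univ.filter (fun g => f g = C)).card := by
    rw [← Finset.card_univ]
    exact Finset.card_eq_sum_card_fiberwise (fun g _ => hmemS g)
  have hsplit : (∑ C ∈ S₁, (Finset.univ.filter (fun g => f g = C)).card) +
      (∑ C ∈ S₂, (Finset.univ.filter (fun g => f g = C)).card) = ∑ C ∈ S,
        (Finset.univ.filter (fun g => f g = C)).card :=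
    Finset.sum_filter_add_sum_filter_not S _ _
  have hlow1 : S₁.card ≤ ∑ C ∈ S₁, (Finset.univ.filter (fun g => f g = C)).card := by
    have : ∀ C ∈ S₁, 1 ≤ (Finset.univ.filter (fun g => f g = C)).card := by
      intro C hC
      rw [hS₁, Finset.mem_filter] at hC
      obtain ⟨g, -, hg⟩ := Finset.mem_image.mp hC.1
      exact Finset.card_pos.mpr ⟨g, Finset.mem_filter.mpr ⟨Finset.mem_univ g, hg⟩⟩
    calc S₁.card = ∑ _C ∈ S₁, 1 := by simp
    _ ≤ _ := Finset.sum_le_sum this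
  have hlow2 : 2 * S₂.card ≤ ∑ C ∈ S₂, (Finset.univ.filter (fun g => f g = C)).card := by
    calc 2 * S₂.card = ∑ _C ∈ S₂, 2 := by rw [Finset.sum_const, smul_eq_mul, mul_comm]
    _ ≤ _ := Finset.sum_le_sum hfib2
  have hcards : S.card = S₁.card + S₂.card :=
    (Finset.card_filter_add_card_filter_not _).symm
  have hmain : 2 * S.card ≤ T.card + Fintype.card G := by
    rw [hGsum, ← hsplit]
    omega
  -- Sylow bound on T
  obtain ⟨P⟩ : Nonempty (Sylow 2 G) := inferInstance
  have hPn' : ∀ (q : ℕ) (_hq : Fact q.Prime) (Q : Sylow q G), (↑Q : Subgroup G).Normal :=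
    ((isNilpotent_of_finite_tfae (G := G)).out 0 3).mp hnil
  have hPn : (P : Subgroup G).Normal := hPn' 2 h2 P
  haveI := Sylow.unique_of_normal P hPn
  have hsub : ∀ g ∈ T, g ∈ (P : Subgroup G) := by
    intro g hg
    have hgp : IsPGroup 2 (Subgroup.zpowers g) := by
      rw [IsPGroup.iff_card]
      have h2' : Nat.card (Subgroup.zpowers g) ≤ 2 := (hTiff g).mp hg
      have hpos : 0 < Nat.card (Subgroup.zpowers g) := Nat.card_pos
      interval_cases h : Nat.card ↥(Subgroup.zpowers g)
      · exact ⟨0, rfl⟩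
      · exact ⟨1, rfl⟩
    obtain ⟨Q, hQ⟩ := hgp.exists_le_sylow
    have : Q = P := Subsingleton.elim Q P
    exact this ▸ hQ (Subgroup.mem_zpowers g)
  have hTP : T.card ≤ Nat.card (P : Subgroup G) := by
    have hsubset : T ⊆ Set.toFinset ((P : Subgroup G) : Set G) := by
      intro g hg
      exact Set.mem_toFinset.mpr (hsub g hg)
    calc T.card ≤ (Set.toFinset ((P : Subgroup G) : Set G)).card := Finset.card_le_card hsubset
    _ = Nat.card (P : Subgroup G) := by
          rw [Set.toFinset_card, Nat.card_eq_fintype_card]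
          rfl
  -- 3 * |P| ≤ |G|
  have hPcard : ∃ n : ℕ, Nat.card (P : Subgroup G) = 2 ^ n := IsPGroup.iff_card.mp P.isPGroup'
  have hpnd : ¬ p ∣ Nat.card (P : Subgroup G) := by
    obtain ⟨n, hn⟩ := hPcard
    rw [hn]
    intro hdvd2
    have := (Nat.prime_dvd_prime_iff_eq hp Nat.prime_two).mp (hp.dvd_of_dvd_pow hdvd2)
    rw [this] at hodd
    exact (Nat.not_odd_iff_even.mpr even_two) hodd
  have hindex : p ∣ (P : Subgroup G).index := by
    have := Subgroup.card_mul_index (P : Subgroup G)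
    rw [← this] at hdvd
    exact (hp.dvd_mul.mp hdvd).resolve_left hpnd
  have hip : 3 ≤ (P : Subgroup G).index := by
    have hpos : 0 < (P : Subgroup G).index := Nat.pos_of_ne_zero Subgroup.index_ne_zero_of_finite
    have hle : p ≤ (P : Subgroup G).index := Nat.le_of_dvd hpos hindex
    have h3 : 3 ≤ p := by
      rcases hodd with ⟨k, hk⟩
      have := hp.two_le
      omega
    omega
  have h3P : 3 * Nat.card (P : Subgroup G) ≤ Nat.card G := by
    calc 3 * Nat.card (P : Subgroup G) ≤ Nat.card (P : Subgroup G) * (P : Subgroup G).index := by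
          rw [mul_comm]
          exact Nat.mul_le_mul le_rfl hip
    _ = Nat.card G := Subgroup.card_mul_index _
  -- finish
  have hcardG : Nat.card G = Fintype.card G := Nat.card_eq_fintype_card
  have hfinal : 12 * S.card < 9 * Nat.card G := by
    have hpos : 0 < Nat.card G := Nat.card_pos
    omega
  rw [alpha, hScard]
  rw [div_lt_div_iff₀ (by exact_mod_cast Nat.card_pos) (by norm_num)]
  have : (S.card : ℚ) * 4 * 3 < 3 * (Nat.card G) * 3 := by
    calc (S.card : ℚ) * 4 * 3 = 12 * S.card := by ring
    _ < 9 * Nat.card G := by exact_mod_cast hfinal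
    _ = 3 * (Nat.card G) * 3 := by ring
  nlinarith [this]

theorem stmt_8 (G : Type*) [Group G] [Finite G] (hnil : Group.IsNilpotent G) :
    (¬ IsPGroup 2 G → alpha G ≠ 3 / 4) ∧
    (∀ p : ℕ, p.Prime → Odd p → p ∣ Nat.card G → alpha G < 3 / 4) := by
  constructor
  · intro h2G
    haveI h2 : Fact (Nat.Prime 2) := ⟨Nat.prime_two⟩
    have hpos : 0 < Nat.card G := Nat.card_pos
    set n := Nat.card G with hn
    set k := ordCompl[2] n with hk
    have hkdvd : k ∣ n := Nat.ordCompl_dvd n 2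
    have hk1 : k ≠ 1 := by
      intro hk1
      apply h2G
      rw [IsPGroup.iff_card]
      refine ⟨n.factorization 2, ?_⟩
      have := Nat.ordProj_mul_ordCompl_eq_self n 2
      rw [← hk] at this
      rw [hk1, mul_one] at this
      exact this.symm
    set p := k.minFac with hp
    have hpp : p.Prime := Nat.minFac_prime hk1
    have hpdvd : p ∣ n := dvd_trans (Nat.minFac_dvd k) hkdvd
    have hpodd : Odd p := by
      refine hpp.odd_of_ne_two ?_
      intro hEq
      have h2k : 2 ∣ k := hEq ▸ Nat.minFac_dvd k
      exact Nat.not_dvd_ordCompl Nat.prime_two hpos.ne' h2k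
    exact ne_of_lt (alpha_lt hnil hpp hpodd hpdvd)
  · intro p hp hodd hdvd
    exact alpha_lt hnil hp hodd hdvd
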